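/- Let L be a first-order language, M ≼ N an elementary pair of L-structures, and A ⊆ M. Let q be an A-invariant complete type over M in a (possibly infinite) tuple of variables x̄, and let q′ be a complete type over N extending q which is a strong heir extension of q over A. Then q′ is A-invariant, and q′ is the unique A-invariant complete type over N extending q. -/
import Mathlib


open FirstOrder

universe u v w x

namespace Stmt6

variable (L : FirstOrder.Language.{u, v})

/-- The tuples `b` and `b'` (from `N`) have the same type over the parameter set `A ⊆ N`. -/
def SameTypeOver {N : Type w} [L.Structure N] (A : Set N) {k : ℕ} (b b' : Fin k → N) : Prop :=
  ∀ (m : ℕ) (ψ : L.Formula (Fin k ⊕ Fin m)) (a : Fin m → N), (∀ i, a i ∈ A) →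
    (ψ.Realize (Sum.elim b a) ↔ ψ.Realize (Sum.elim b' a))

/-- `q` is a complete type over the parameter set `D ⊆ N` in variables indexed by `ι`:
`q` only uses parameters from `D`, and `q` is exactly the set of formulas `φ(x̄, b̄)` (with
`b̄` from `D`) satisfied by some fixed realization `c` of `q` in an elementary extension of
`N`.  (For `D` the carrier of an elementary substructure `M ≼ N` this is equivalent to `q`
being a maximal set of formulas with parameters in `M` which, together with the elementary
diagram of `M`, is satisfiable.) -/
def IsCompleteTypeOver (N : Type w) [L.Structure N] (ι : Type x) (D : Set N)
    (q : ∀ k : ℕ, L.Formula (ι ⊕ Fin k) → (Fin k → N) → Prop) : Prop :=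
  (∀ k φ b, q k φ b → ∀ i, b i ∈ D) ∧
  ∃ (Q : Type (max u v w x)) (iQ : L.Structure Q),
    letI := iQ
    ∃ (g : N ↪ₑ[L] Q) (c : ι → Q),
      ∀ (k : ℕ) (φ : L.Formula (ι ⊕ Fin k)) (b : Fin k → N), (∀ i, b i ∈ D) →
        (q k φ b ↔ φ.Realize (Sum.elim c fun i => g (b i)))

/-- The type `q` over `D` is invariant over `A`: membership of `φ(x̄, b̄)` in `q` depends only
on the type of `b̄` over `A`. -/
def IsInvariantOver {N : Type w} [L.Structure N] {ι : Type x} (A D : Set N)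
    (q : ∀ k : ℕ, L.Formula (ι ⊕ Fin k) → (Fin k → N) → Prop) : Prop :=
  ∀ (k : ℕ) (φ : L.Formula (ι ⊕ Fin k)) (b b' : Fin k → N),
    (∀ i, b i ∈ D) → (∀ i, b' i ∈ D) → SameTypeOver L A b b' → (q k φ b ↔ q k φ b')

/-- `q'` (a type over `N`) is a strong heir extension over `A` (of its restriction to the
parameter set `S`): for every finite tuple `mt` from `S`, every formula `φ(x̄, b̄) ∈ q'` with
`b̄` from `N`, there is a tuple `b'` from `S` with `φ(x̄, b̄') ∈ q'` and
`tp(b̄/A ∪ mt) = tp(b̄'/A ∪ mt)`. -/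
def IsStrongHeirOver {N : Type w} [L.Structure N] {ι : Type x} (A S : Set N)
    (q' : ∀ k : ℕ, L.Formula (ι ⊕ Fin k) → (Fin k → N) → Prop) : Prop :=
  ∀ (m : ℕ) (mt : Fin m → N), (∀ i, mt i ∈ S) →
    ∀ (k : ℕ) (φ : L.Formula (ι ⊕ Fin k)) (b : Fin k → N), q' k φ b →
      ∃ b' : Fin k → N, (∀ i, b' i ∈ S) ∧ q' k φ b' ∧
        SameTypeOver L (A ∪ Set.range mt) b b'

end Stmt6

section Helpers
open Stmt6
variable {L : FirstOrder.Language.{u, v}} {N : Type w} [L.Structure N]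

lemma sameTypeOver_symm {A : Set N} {k : ℕ} {b b' : Fin k → N}
    (h : SameTypeOver L A b b') : SameTypeOver L A b' b :=
  fun m ψ a ha => (h m ψ a ha).symm

lemma sameTypeOver_trans {A : Set N} {k : ℕ} {b b' b'' : Fin k → N}
    (h : SameTypeOver L A b b') (h' : SameTypeOver L A b' b'') : SameTypeOver L A b b'' :=
  fun m ψ a ha => (h m ψ a ha).trans (h' m ψ a ha)

lemma sameTypeOver_mono {A B : Set N} (hAB : A ⊆ B) {k : ℕ} {b b' : Fin k → N}
    (h : SameTypeOver L B b b') : SameTypeOver L A b b' :=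
  fun m ψ a ha => h m ψ a (fun i => hAB (ha i))

lemma not_char {ι : Type x} {D : Set N}
    {q : ∀ k : ℕ, L.Formula (ι ⊕ Fin k) → (Fin k → N) → Prop}
    (hq : IsCompleteTypeOver L N ι D q) {k : ℕ} (φ : L.Formula (ι ⊕ Fin k))
    (b : Fin k → N) (hb : ∀ i, b i ∈ D) : q k φ.not b ↔ ¬ q k φ b := by
  obtain ⟨-, Q, iQ, g, c, hchar⟩ := hq
  rw [hchar k φ.not b hb, hchar k φ b hb, FirstOrder.Language.Formula.realize_not]

end Helpers


open Stmt6 in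
/-- Let `M ≼ N` (with `M` realized as an elementary substructure `S` of `N`), `A ⊆ M`.  If `q`
is an `A`-invariant complete type over `M` in variables `x̄` (indexed by `ι`), and `q'` is a
complete type over `N` extending `q` which is a strong heir extension of `q` over `A`, then
`q'` is `A`-invariant and is the unique `A`-invariant complete type over `N` extending `q`. -/
theorem statement6 (L : FirstOrder.Language.{u, v}) (N : Type w) [L.Structure N]
    (S : L.ElementarySubstructure N) (A : Set N) (hA : A ⊆ (S : Set N)) (ι : Type x)
    (q q' : ∀ k : ℕ, L.Formula (ι ⊕ Fin k) → (Fin k → N) → Prop)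
    (hq : IsCompleteTypeOver L N ι (S : Set N) q)
    (hqinv : IsInvariantOver L A (S : Set N) q)
    (hq' : IsCompleteTypeOver L N ι Set.univ q')
    (hext : ∀ k φ b, q k φ b → q' k φ b)
    (hheir : IsStrongHeirOver L A (S : Set N) q') :
    IsInvariantOver L A Set.univ q' ∧
      ∀ q'' : ∀ k : ℕ, L.Formula (ι ⊕ Fin k) → (Fin k → N) → Prop,
        IsCompleteTypeOver L N ι Set.univ q'' →
        (∀ k φ b, q k φ b → q'' k φ b) →
        IsInvariantOver L A Set.univ q'' →
        ∀ k φ b, q'' k φ b ↔ q' k φ b := by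
  have hnot' : ∀ (k : ℕ) (φ : L.Formula (ι ⊕ Fin k)) (b : Fin k → N),
      q' k φ.not b ↔ ¬ q' k φ b := fun k φ b => not_char hq' φ b (fun _ => trivial)
  have hnot : ∀ (k : ℕ) (φ : L.Formula (ι ⊕ Fin k)) (b : Fin k → N), (∀ i, b i ∈ (S : Set N)) →
      (q k φ.not b ↔ ¬ q k φ b) := fun k φ b hb => not_char hq φ b hb
  have hres : ∀ (k : ℕ) (φ : L.Formula (ι ⊕ Fin k)) (b : Fin k → N), (∀ i, b i ∈ (S : Set N)) →
      (q' k φ b ↔ q k φ b) := by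
    intro k φ b hb
    refine ⟨fun h => ?_, hext k φ b⟩
    by_contra hn
    exact (hnot' k φ b).mp (hext k φ.not b ((hnot k φ b hb).mpr hn)) h
  have key : ∀ (k : ℕ) (ψ : L.Formula (ι ⊕ Fin k)) (c c' : Fin k → N), SameTypeOver L A c c' →
      q' k ψ c → q' k ψ c' := by
    intro k ψ c c' hcc' hψ
    by_contra hn
    have hn' : q' k ψ.not c' := (hnot' k ψ c').mpr hn
    obtain ⟨b₀, hb₀S, hq'b₀, hstb₀⟩ := hheir 0 Fin.elim0 (fun i => i.elim0) k ψ c hψ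
    obtain ⟨b₁, hb₁S, hq'b₁, hstb₁⟩ := hheir 0 Fin.elim0 (fun i => i.elim0) k ψ.not c' hn'
    have h0 : q k ψ b₀ := (hres k ψ b₀ hb₀S).mp hq'b₀
    have h1 : ¬ q k ψ b₁ := (hnot k ψ b₁ hb₁S).mp ((hres k ψ.not b₁ hb₁S).mp hq'b₁)
    have hst : SameTypeOver L A b₀ b₁ :=
      sameTypeOver_trans (sameTypeOver_symm (sameTypeOver_mono Set.subset_union_left hstb₀))
        (sameTypeOver_trans hcc' (sameTypeOver_mono Set.subset_union_left hstb₁))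
    exact h1 ((hqinv k ψ b₀ b₁ hb₀S hb₁S hst).mp h0)
  constructor
  · intro k φ b b' _ _ hbb'
    exact ⟨key k φ b b' hbb', key k φ b' b (sameTypeOver_symm hbb')⟩
  · intro q'' hq'' hext'' hinv'' k φ b
    have hnot'' : ∀ (k : ℕ) (φ : L.Formula (ι ⊕ Fin k)) (b : Fin k → N),
        q'' k φ.not b ↔ ¬ q'' k φ b := fun k φ b => not_char hq'' φ b (fun _ => trivial)
    have fwd : ∀ (ψ : L.Formula (ι ⊕ Fin k)) (c : Fin k → N), q'' k ψ c → q' k ψ c := by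
      intro ψ c h
      by_contra hn
      have hn' : q' k ψ.not c := (hnot' k ψ c).mpr hn
      obtain ⟨b', hb'S, hq'b', hst⟩ := hheir 0 Fin.elim0 (fun i => i.elim0) k ψ.not c hn'
      have h2 : q'' k ψ.not b' := hext'' k ψ.not b' ((hres k ψ.not b' hb'S).mp hq'b')
      have h3 : q'' k ψ.not c := (hinv'' k ψ.not c b' (fun _ => trivial) (fun _ => trivial)
          (sameTypeOver_mono Set.subset_union_left hst)).mpr h2
      exact (hnot'' k ψ c).mp h3 h
    refine ⟨fwd φ b, fun h => ?_⟩
    by_contra hn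
    exact (hnot' k φ b).mp (fwd φ.not b ((hnot'' k φ b).mpr hn)) h
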